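/- Let n > 1 be an integer, R = ℤ/nℤ, and R^× its group of units. Let D(R^×) denote the least positive integer ℓ such that every multiset over R^× of cardinality ℓ has a nonempty sub-multiset with product 1, and let I(S_R) denote the least positive integer ℓ such that every multiset over R of cardinality ℓ has a nonempty sub-multiset whose product x satisfies x·x = x. Then I(S_R) ≥ D(R^×) + Ω(n) − ω(n). -/

import Mathlib

/-- The Davenport constant of the unit group `(ℤ/nℤ)ˣ`: the least positive integer `ℓ` such
that every multiset over `(ℤ/nℤ)ˣ` of cardinality `ℓ` has a nonempty sub-multiset with
product `1`. -/
noncomputable def davenportUnits (n : ℕ) : ℕ :=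
  sInf {ℓ : ℕ | 0 < ℓ ∧ ∀ T : Multiset (ZMod n)ˣ, T.card = ℓ →
    ∃ W : Multiset (ZMod n)ˣ, W ≤ T ∧ W ≠ 0 ∧ W.prod = 1}

/-- The `n`-modular Erdős–Burgess constant: the least positive integer `ℓ` such that every
multiset over `ℤ/nℤ` of cardinality `ℓ` has a nonempty sub-multiset whose product `x`
satisfies `x * x = x`. -/
noncomputable def modularErdosBurgess (n : ℕ) : ℕ :=
  sInf {ℓ : ℕ | 0 < ℓ ∧ ∀ T : Multiset (ZMod n), T.card = ℓ →
    ∃ W : Multiset (ZMod n), W ≤ T ∧ W ≠ 0 ∧ W.prod * W.prod = W.prod}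



/-- Extract a preimage multiset under `map`. -/
lemma multiset_exists_of_le_map {α β : Type*} [DecidableEq β] {f : α → β} {t : Multiset α} :
    ∀ {s : Multiset β}, s ≤ t.map f → ∃ u : Multiset α, u ≤ t ∧ u.map f = s := by
  classical
  induction t using Multiset.induction with
  | empty =>
    intro s hs
    rw [Multiset.map_zero, Multiset.le_zero] at hs
    exact ⟨0, le_rfl, by simp [hs]⟩
  | cons a t ih =>
    intro s hs
    rw [Multiset.map_cons] at hs
    by_cases h : f a ∈ s
    · have hle : s.erase (f a) ≤ t.map f := by
        rw [Multiset.le_iff_count] at hs ⊢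
        intro b
        have := hs b
        rcases eq_or_ne b (f a) with rfl | hb
        · simp only [Multiset.count_cons_self] at this
          rw [Multiset.count_erase_self]; omega
        · simp only [Multiset.count_cons_of_ne hb] at this
          rw [Multiset.count_erase_of_ne hb]; omega
      obtain ⟨u, hu, hmap⟩ := ih hle
      exact ⟨a ::ₘ u, Multiset.cons_le_cons _ hu,
        by rw [Multiset.map_cons, hmap, Multiset.cons_erase h]⟩
    · have hle : s ≤ t.map f := by
        rw [Multiset.le_iff_count] at hs ⊢
        intro b
        have := hs b
        rcases eq_or_ne b (f a) with rfl | hb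
        · simp [Multiset.count_eq_zero_of_notMem h]
        · simpa [Multiset.count_cons_of_ne hb] using this
      obtain ⟨u, hu, hmap⟩ := ih hle
      exact ⟨u, hu.trans (Multiset.le_cons_self _ _), hmap⟩

/-- Decompose a sub-multiset of a sum. -/
lemma multiset_le_add_decomp {α : Type*} [DecidableEq α] {W A B : Multiset α} (h : W ≤ A + B) :
    ∃ WA WB, WA ≤ A ∧ WB ≤ B ∧ W = WA + WB := by
  refine ⟨W ∩ A, W - A, Multiset.inter_le_right, ?_, ?_⟩
  · rw [Multiset.sub_le_iff_le_add]; rwa [add_comm]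
  · ext b
    rw [Multiset.count_add, Multiset.count_inter, Multiset.count_sub]
    omega

/-- Some power of every element of a finite monoid is idempotent. -/
lemma exists_idem_pow {M : Type*} [Monoid M] [Finite M] (x : M) :
    ∃ e > 0, x ^ e * x ^ e = x ^ e := by
  obtain ⟨i, j, hne, hij⟩ := Finite.exists_ne_map_eq_of_infinite (fun k : ℕ => x ^ (k + 1))
  wlog hlt : i < j generalizing i j
  · exact this j i hne.symm hij.symm (by omega)
  have hij' : x ^ (i + 1) = x ^ (j + 1) := hij
  set a := i + 1 with ha
  set d := j - i with hd
  have hd0 : 0 < d := by omega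
  have key : ∀ m, a ≤ m → x ^ (m + d) = x ^ m := by
    intro m hm
    have h1 : x ^ (a + d) = x ^ a := by
      have : a + d = j + 1 := by omega
      rw [this, ← hij']
    calc x ^ (m + d) = x ^ (m - a) * x ^ (a + d) := by
          rw [← pow_add]; congr 1; omega
      _ = x ^ (m - a) * x ^ a := by rw [h1]
      _ = x ^ m := by rw [← pow_add]; congr 1; omega
  have key2 : ∀ k m, a ≤ m → x ^ (m + k * d) = x ^ m := by
    intro k
    induction k with
    | zero => simp
    | succ k ih =>
      intro m hm
      have h2 : m + (k + 1) * d = (m + k * d) + d := by ring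
      rw [h2, key (m + k * d) (by omega), ih m hm]
  refine ⟨a * d, by positivity, ?_⟩
  rw [← pow_add]
  exact key2 a (a * d) (Nat.le_mul_of_pos_right a hd0)

/-- A uniform idempotent-producing exponent for a finite monoid. -/
lemma exists_uniform_idem_pow (M : Type*) [Monoid M] [Fintype M] [DecidableEq M] :
    ∃ e > 0, ∀ x : M, x ^ e * x ^ e = x ^ e := by
  choose f hf0 hf using fun x : M => exists_idem_pow x
  refine ⟨∏ x : M, f x, Finset.prod_pos fun x _ => hf0 x, fun x => ?_⟩
  obtain ⟨c, hc⟩ := Finset.dvd_prod_of_mem f (Finset.mem_univ x)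
  have : IsIdempotentElem (x ^ f x) := hf x
  rw [hc, pow_mul]
  exact (this.pow c)

/-- Pigeonhole: a big multiset has an element of large multiplicity. -/
lemma exists_count_ge {α : Type*} [Fintype α] [DecidableEq α] {e : ℕ}
    {T : Multiset α} (hT : Multiset.card T = Fintype.card α * e) (he : 0 < e)
    [Nonempty α] : ∃ x, e ≤ T.count x := by
  by_contra h
  push_neg at h
  have h1 : ∑ x : α, T.count x = Multiset.card T := by
    rw [← Multiset.toFinset_sum_count_eq]
    exact (Finset.sum_subset (Finset.subset_univ _)
      (fun x _ hx => Multiset.count_eq_zero_of_notMem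
        (by simpa [Multiset.mem_toFinset] using hx))).symm
  have h2 : ∑ x : α, T.count x ≤ ∑ _x : α, (e - 1) :=
    Finset.sum_le_sum fun x _ => by have := h x; omega
  rw [Finset.sum_const, smul_eq_mul, Finset.card_univ] at h2
  rw [h1, hT] at h2
  have hcard : 0 < Fintype.card α := Fintype.card_pos
  obtain ⟨e', rfl⟩ : ∃ e', e = e' + 1 := ⟨e - 1, by omega⟩
  simp only [Nat.add_sub_cancel] at h2
  nlinarith


/-- factorization of a product of primes counts multiplicity. -/
lemma prod_primes_factorization {Q : Multiset ℕ} (hQ : ∀ q ∈ Q, q.Prime) (p : ℕ) :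
    Q.prod.factorization p = Q.count p := by
  induction Q using Multiset.induction with
  | empty => simp
  | cons q Q ih =>
    have hq : q.Prime := hQ q (Multiset.mem_cons_self _ _)
    have hQ' : ∀ r ∈ Q, r.Prime := fun r hr => hQ r (Multiset.mem_cons_of_mem hr)
    have hprod : Q.prod ≠ 0 := by
      refine Multiset.prod_ne_zero ?_
      intro h0
      exact (hQ' 0 h0).ne_zero rfl
    rw [Multiset.prod_cons, Nat.factorization_mul hq.ne_zero hprod,
      Finsupp.add_apply, hq.factorization, ih hQ', Multiset.count_cons,
      Finsupp.single_apply]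
    rcases eq_or_ne p q with rfl | hpq
    · simp [Nat.add_comm]
    · simp [hpq, Ne.symm hpq]

lemma mem_EB_set (n : ℕ) (hn : 1 < n) :
    ∃ ℓ : ℕ, 0 < ℓ ∧ ∀ T : Multiset (ZMod n), Multiset.card T = ℓ →
      ∃ W : Multiset (ZMod n), W ≤ T ∧ W ≠ 0 ∧ W.prod * W.prod = W.prod := by
  haveI : NeZero n := ⟨by omega⟩
  obtain ⟨e, he, hidem⟩ := exists_uniform_idem_pow (ZMod n)
  refine ⟨Fintype.card (ZMod n) * e, by positivity, fun T hT => ?_⟩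
  obtain ⟨x, hx⟩ := exists_count_ge hT he
  refine ⟨Multiset.replicate e x, ?_, ?_, ?_⟩
  · rw [Multiset.le_iff_count]
    intro b
    rw [Multiset.count_replicate]
    split
    · subst ‹x = b›; exact hx
    · exact Nat.zero_le _
  · intro h0
    have := congrArg Multiset.card h0
    simp [he.ne'] at this
  · rw [Multiset.prod_replicate]; exact hidem x

lemma mem_D_set (n : ℕ) (hn : 1 < n) :
    ∃ ℓ : ℕ, 0 < ℓ ∧ ∀ T : Multiset (ZMod n)ˣ, Multiset.card T = ℓ →
      ∃ W : Multiset (ZMod n)ˣ, W ≤ T ∧ W ≠ 0 ∧ W.prod = 1 := by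
  haveI : NeZero n := ⟨by omega⟩
  set c := Fintype.card (ZMod n)ˣ with hc
  have hc0 : 0 < c := Fintype.card_pos
  refine ⟨c * c, by positivity, fun T hT => ?_⟩
  obtain ⟨x, hx⟩ := exists_count_ge hT hc0
  refine ⟨Multiset.replicate c x, ?_, ?_, ?_⟩
  · rw [Multiset.le_iff_count]
    intro b
    rw [Multiset.count_replicate]
    split
    · subst ‹x = b›; exact hx
    · exact Nat.zero_le _
  · intro h0
    have := congrArg Multiset.card h0
    simp [hc0.ne'] at this
  · rw [Multiset.prod_replicate]; exact pow_card_eq_one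

set_option maxHeartbeats 1000000 in
/-- `I(S_R) ≥ D(Rˣ) + Ω(n) - ω(n)` for `R = ℤ/nℤ`, `n > 1`. -/
theorem stmt_3 (n : ℕ) (hn : 1 < n) :
    davenportUnits n + n.primeFactorsList.length - n.primeFactors.card ≤
      modularErdosBurgess n := by
  classical
  haveI : NeZero n := ⟨by omega⟩
  -- the two defining sets
  set SD : Set ℕ := {ℓ : ℕ | 0 < ℓ ∧ ∀ T : Multiset (ZMod n)ˣ, T.card = ℓ →
    ∃ W : Multiset (ZMod n)ˣ, W ≤ T ∧ W ≠ 0 ∧ W.prod = 1} with hSD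
  set SI : Set ℕ := {ℓ : ℕ | 0 < ℓ ∧ ∀ T : Multiset (ZMod n), T.card = ℓ →
    ∃ W : Multiset (ZMod n), W ≤ T ∧ W ≠ 0 ∧ W.prod * W.prod = W.prod} with hSI
  have hDdef : davenportUnits n = sInf SD := rfl
  have hIdef : modularErdosBurgess n = sInf SI := rfl
  have hSD_ne : SD.Nonempty := by
    obtain ⟨ℓ, h1, h2⟩ := mem_D_set n hn
    exact ⟨ℓ, h1, h2⟩
  have hSI_ne : SI.Nonempty := by
    obtain ⟨ℓ, h1, h2⟩ := mem_EB_set n hn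
    exact ⟨ℓ, h1, h2⟩
  have hDmem : davenportUnits n ∈ SD := by rw [hDdef]; exact Nat.sInf_mem hSD_ne
  have hD1 : 0 < davenportUnits n := hDmem.1
  -- an extremal unit multiset
  obtain ⟨U, hUcard, hU⟩ : ∃ U : Multiset (ZMod n)ˣ, Multiset.card U = davenportUnits n - 1 ∧
      ∀ V, V ≤ U → V ≠ 0 → V.prod ≠ 1 := by
    rcases eq_or_lt_of_le (Nat.succ_le_of_lt hD1) with h1 | h2
    · refine ⟨0, by simp; omega, fun V hV hV0 => absurd (Multiset.le_zero.mp hV) hV0⟩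
    · have hnot : davenportUnits n - 1 ∉ SD := by
        rw [hDdef]
        exact Nat.notMem_of_lt_sInf (by omega)
      rw [hSD] at hnot
      simp only [Set.mem_setOf_eq, not_and, not_forall, not_exists] at hnot
      obtain ⟨T, hT⟩ := hnot (by omega)
      push_neg at hT
      obtain ⟨hTcard, hT2⟩ := hT
      exact ⟨T, hTcard, fun V h1' h2' => hT2 V h1' h2'⟩
  -- the prime part
  set L : Multiset ℕ := (n.primeFactorsList : Multiset ℕ) with hL
  set P : Multiset ℕ := L - L.dedup with hP
  have hdle : L.dedup ≤ L := Multiset.dedup_le L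
  have homega : n.primeFactors.card = Multiset.card L.dedup := by
    rw [Nat.primeFactors, List.card_toFinset, hL, Multiset.coe_dedup, Multiset.coe_card]
  have hOmega : n.primeFactorsList.length = Multiset.card L := by
    rw [hL, Multiset.coe_card]
  have hωΩ : n.primeFactors.card ≤ n.primeFactorsList.length := by
    rw [homega, hOmega]
    exact Multiset.card_le_card hdle
  have hPcard : Multiset.card P =
      n.primeFactorsList.length - n.primeFactors.card := by
    rw [hP, Multiset.card_sub hdle, homega, hOmega]
  have hPmem : ∀ q ∈ P, q ∈ n.primeFactorsList := by
    intro q hq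
    have : q ∈ L := Multiset.mem_of_le (tsub_le_self) hq
    rwa [hL, Multiset.mem_coe] at this
  have hPcount : ∀ p : ℕ, p.Prime → p ∣ n →
      Multiset.count p P = n.factorization p - 1 := by
    intro p hp hpn
    have hmem : p ∈ L := by
      rw [hL, Multiset.mem_coe]
      exact (Nat.mem_primeFactorsList_iff_dvd (by omega) hp).mpr hpn
    rw [hP, Multiset.count_sub, Multiset.count_dedup, if_pos hmem]
    congr 1
    rw [hL, Multiset.coe_count, Nat.primeFactorsList_count_eq]
  -- the bad multiset
  set Tbad : Multiset (ZMod n) :=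
    U.map (fun u : (ZMod n)ˣ => (u : ZMod n)) + P.map (fun q : ℕ => (q : ZMod n)) with hTbad
  have hTbadcard : Multiset.card Tbad =
      (davenportUnits n - 1) + (n.primeFactorsList.length - n.primeFactors.card) := by
    rw [hTbad, Multiset.card_add, Multiset.card_map, Multiset.card_map, hUcard, hPcard]
  -- no nonempty sub-multiset of Tbad has idempotent product
  have hbad : ∀ W : Multiset (ZMod n), W ≤ Tbad → W ≠ 0 →
      W.prod * W.prod ≠ W.prod := by
    intro W hW hW0 hidem
    obtain ⟨WA, WB, hWA, hWB, rfl⟩ := multiset_le_add_decomp hW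
    obtain ⟨V, hVU, rfl⟩ := multiset_exists_of_le_map hWA
    obtain ⟨Q, hQP, rfl⟩ := multiset_exists_of_le_map hWB
    have hQprime : ∀ q ∈ Q, q.Prime := fun q hq =>
      Nat.prime_of_mem_primeFactorsList (hPmem q (Multiset.mem_of_le hQP hq))
    have hQdvd : ∀ q ∈ Q, q ∣ n := fun q hq =>
      Nat.dvd_of_mem_primeFactorsList (hPmem q (Multiset.mem_of_le hQP hq))
    set u : (ZMod n)ˣ := V.prod with hu
    set a : ℕ := (u : ZMod n).val with hadef
    have hacop : a.Coprime n := ZMod.val_coe_unit_coprime u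
    set M : ℕ := Q.prod with hM
    have hM0 : M ≠ 0 := Multiset.prod_ne_zero fun h0 => (hQprime 0 h0).ne_zero rfl
    have ha0 : a ≠ 0 := by
      intro h0
      rw [h0, Nat.coprime_zero_left] at hacop
      omega
    set N : ℕ := a * M with hN
    have hN0 : N ≠ 0 := mul_ne_zero ha0 hM0
    have hacast : ((a : ℕ) : ZMod n) = (u : ZMod n) := by
      rw [hadef, ZMod.natCast_val, ZMod.cast_id]
    have hprodW : (Multiset.map (fun u : (ZMod n)ˣ => (u : ZMod n)) V +
        Multiset.map (fun q : ℕ => (q : ZMod n)) Q).prod = (N : ZMod n) := by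
      rw [Multiset.prod_add, hN, Nat.cast_mul, hacast]
      congr 1
      · exact Multiset.prod_hom V (Units.coeHom (ZMod n))
      · rw [hM]
        exact (Multiset.prod_hom Q (Nat.castRingHom (ZMod n)).toMonoidHom).symm ▸
          (Nat.cast_multiset_prod Q).symm
    rw [hprodW] at hidem
    have hmod : N * N ≡ N [MOD n] := by
      rw [← ZMod.natCast_eq_natCast_iff]
      push_cast
      exact hidem
    have hdvd : n ∣ N * (N - 1) := by
      have h1 : n ∣ N * N - N :=
        (Nat.modEq_iff_dvd' (Nat.le_mul_of_pos_left N (Nat.pos_of_ne_zero hN0))).mp hmod.symm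
      have h2 : N * N - N = N * (N - 1) := by
        obtain ⟨m, hm⟩ : ∃ m, N = m + 1 := ⟨N - 1, by omega⟩
        rw [hm, Nat.mul_succ, Nat.add_sub_cancel, Nat.add_sub_cancel]
      rwa [h2] at h1
    have hQcount : ∀ p, p.Prime → p ∣ n →
        N.factorization p ≤ n.factorization p - 1 := by
      intro p hp hpn
      have hpa : ¬ p ∣ a := by
        intro hd
        have h1 : p ∣ Nat.gcd a n := Nat.dvd_gcd hd hpn
        rw [Nat.Coprime.gcd_eq_one hacop] at h1
        exact hp.ne_one (Nat.dvd_one.mp h1)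
      rw [hN, Nat.factorization_mul ha0 hM0, Finsupp.add_apply,
        Nat.factorization_eq_zero_of_not_dvd hpa, hM,
        prod_primes_factorization hQprime, zero_add]
      calc Multiset.count p Q ≤ Multiset.count p P := Multiset.count_le_of_le p hQP
        _ = n.factorization p - 1 := hPcount p hp hpn
    have hpnotN : ∀ p, p.Prime → p ∣ n → ¬ p ∣ N := by
      intro p hp hpn hpN
      set K := n.factorization p with hK
      have hK1 : 1 ≤ K := hp.factorization_pos_of_dvd (by omega) hpn
      have h1 : ¬ p ∣ (N - 1) := by
        intro h
        have h2 := Nat.dvd_sub hpN h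
        rw [show N - (N - 1) = 1 by omega] at h2
        exact hp.ne_one (Nat.dvd_one.mp h2)
      have h2 : (p ^ K).Coprime (N - 1) :=
        Nat.Coprime.pow_left _ ((hp.coprime_iff_not_dvd).mpr h1)
      have h3 : p ^ K ∣ N * (N - 1) := dvd_trans (Nat.ordProj_dvd n p) hdvd
      have h4 : p ^ K ∣ N := h2.dvd_of_dvd_mul_right h3
      have h5 : K ≤ N.factorization p :=
        (hp.pow_dvd_iff_le_factorization hN0).mp h4
      have h6 := hQcount p hp hpn
      omega
    have hN1 : n ∣ N - 1 := by
      rw [Nat.dvd_iff_prime_pow_dvd_dvd]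
      intro p k hp hpk
      rcases Nat.eq_zero_or_pos k with rfl | hk
      · simpa using one_dvd _
      have hp' : p.Prime := hp
      have hpn : p ∣ n := dvd_trans (dvd_pow_self p (by omega)) hpk
      have hcop : (p ^ k).Coprime N :=
        Nat.Coprime.pow_left _ ((hp'.coprime_iff_not_dvd).mpr (hpnotN p hp' hpn))
      exact hcop.dvd_of_dvd_mul_left (dvd_trans hpk hdvd)
    have hone : (N : ZMod n) = 1 := by
      have hmod1 : (1 : ℕ) ≡ N [MOD n] := (Nat.modEq_iff_dvd' (by omega)).mpr hN1
      calc (N : ZMod n) = ((1 : ℕ) : ZMod n) := by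
            rw [ZMod.natCast_eq_natCast_iff]; exact hmod1.symm
        _ = 1 := Nat.cast_one
    have hQ0 : Q = 0 := by
      by_contra hQne
      obtain ⟨q, hq⟩ := Multiset.exists_mem_of_ne_zero hQne
      have hq1 : q ∣ N := dvd_trans (Multiset.dvd_prod hq) (Dvd.intro_left a rfl)
      have hq2 : q ∣ N - 1 := dvd_trans (hQdvd q hq) hN1
      have hq3 := Nat.dvd_sub hq1 hq2
      rw [show N - (N - 1) = 1 by omega] at hq3
      exact (hQprime q hq).ne_one (Nat.dvd_one.mp hq3)
    -- hence `M = 1`, `Q = 0`, and the unit part multiplies to 1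
    have hVne : V ≠ 0 := by
      intro h0
      apply hW0
      rw [h0, hQ0]
      simp
    have huone : (u : ZMod n) = 1 := by
      have hM1 : M = 1 := by rw [hM, hQ0, Multiset.prod_zero]
      have : N = a := by rw [hN, hM1, mul_one]
      rw [← hacast, ← this, hone]
    exact hU V hVU hVne (Units.ext (by rw [← hu, huone, Units.val_one]))
  -- conclude: every member of `SI` exceeds `card Tbad`
  have hIlow : ∀ ℓ ∈ SI, Multiset.card Tbad < ℓ := by
    intro ℓ hℓ
    by_contra hle
    push_neg at hle
    obtain ⟨hl0, hprop⟩ := hℓ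
    set T' : Multiset (ZMod n) := (↑(Tbad.toList.take ℓ) : Multiset (ZMod n)) with hT'
    have hT'le : T' ≤ Tbad := by
      rw [hT']
      calc (↑(Tbad.toList.take ℓ) : Multiset (ZMod n)) ≤ ↑Tbad.toList := by
            rw [Multiset.coe_le]
            exact (List.take_sublist _ _).subperm
        _ = Tbad := Tbad.coe_toList
    have hT'card : Multiset.card T' = ℓ := by
      rw [hT', Multiset.coe_card, List.length_take, Multiset.length_toList]
      omega
    obtain ⟨W, hWle, hWne, hWid⟩ := hprop T' hT'card
    exact hbad W (hWle.trans hT'le) hWne hWid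
  have hImem : sInf SI ∈ SI := Nat.sInf_mem hSI_ne
  have hfin := hIlow _ hImem
  rw [hIdef]
  rw [hTbadcard] at hfin
  omega
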